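/- Let f ∈ ℤ[x] be a monic polynomial. Suppose there exists a positive integer N such that for every prime p ≥ N one has f(p) ∣ f(p^p) (divisibility in ℤ). Then there exist a nonnegative integer e₀, a positive integer m, positive integers d₁,…,d_m and nonnegative integers e₁,…,e_m such that f(x) = x^{e₀} · Φ_{d₁}(x)^{e₁} · Φ_{d₂}(x)^{e₂} ⋯ Φ_{d_m}(x)^{e_m}, where Φ_d denotes the d-th cyclotomic polynomial. -/

import Mathlib

open Polynomial

private lemma aux_totient_sq : ∀ n : ℕ,
    n ≤ 2 * Nat.totient n ^ 2 ∧ (Odd n → n ≤ Nat.totient n ^ 2) := by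
  intro n
  induction n using Nat.recOnPosPrimePosCoprime with
  | prime_pow p k hp hk =>
      have hp2 : 2 ≤ p := hp.two_le
      obtain ⟨r, rfl⟩ : ∃ r, p = r + 2 := ⟨p - 2, by omega⟩
      obtain ⟨a, rfl⟩ : ∃ a, k = a + 1 := ⟨k - 1, by omega⟩
      have htot : Nat.totient ((r + 2) ^ (a + 1)) = (r + 2) ^ a * (r + 1) := by
        rw [Nat.totient_prime_pow hp (Nat.succ_pos a)]
        simp
      have hpa : (r + 2) ^ a ≤ ((r + 2) ^ a) ^ 2 := Nat.le_self_pow two_ne_zero _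
      constructor
      · rw [htot]
        have h1 : r + 2 ≤ 2 * (r + 1) ^ 2 := by nlinarith [sq_nonneg r]
        calc (r + 2) ^ (a + 1) = (r + 2) ^ a * (r + 2) := pow_succ _ _
          _ ≤ ((r + 2) ^ a) ^ 2 * (2 * (r + 1) ^ 2) := Nat.mul_le_mul hpa h1
          _ = 2 * ((r + 2) ^ a * (r + 1)) ^ 2 := by ring
      · intro hodd
        rw [htot]
        have hro : 1 ≤ r := by
          by_contra hr
          have : r = 0 := by omega
          subst this
          have : Even ((2 : ℕ) ^ (a + 1)) := Nat.even_pow.mpr ⟨even_two, by omega⟩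
          exact (Nat.not_even_iff_odd.mpr hodd) this
        have h1 : r + 2 ≤ (r + 1) ^ 2 := by nlinarith
        calc (r + 2) ^ (a + 1) = (r + 2) ^ a * (r + 2) := pow_succ _ _
          _ ≤ ((r + 2) ^ a) ^ 2 * (r + 1) ^ 2 := Nat.mul_le_mul hpa h1
          _ = ((r + 2) ^ a * (r + 1)) ^ 2 := by ring
  | zero => simp
  | one => simp
  | coprime a b ha hb hab iha ihb =>
      have htot : Nat.totient (a * b) = Nat.totient a * Nat.totient b :=
        Nat.totient_mul hab
      constructor
      · rcases Nat.even_or_odd a with hae | hao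
        · rcases Nat.even_or_odd b with hbe | hbo
          · exfalso
            have h2 : (2 : ℕ) ∣ Nat.gcd a b := Nat.dvd_gcd hae.two_dvd hbe.two_dvd
            rw [hab] at h2
            omega
          · have h1 : a ≤ 2 * Nat.totient a ^ 2 := iha.1
            have h2 : b ≤ Nat.totient b ^ 2 := ihb.2 hbo
            calc a * b ≤ (2 * Nat.totient a ^ 2) * (Nat.totient b ^ 2) :=
                Nat.mul_le_mul h1 h2
              _ = 2 * (Nat.totient a * Nat.totient b) ^ 2 := by ring
              _ = 2 * Nat.totient (a * b) ^ 2 := by rw [htot]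
        · have h1 : a ≤ Nat.totient a ^ 2 := iha.2 hao
          have h2 : b ≤ 2 * Nat.totient b ^ 2 := ihb.1
          calc a * b ≤ (Nat.totient a ^ 2) * (2 * Nat.totient b ^ 2) :=
              Nat.mul_le_mul h1 h2
            _ = 2 * (Nat.totient a * Nat.totient b) ^ 2 := by ring
            _ = 2 * Nat.totient (a * b) ^ 2 := by rw [htot]
      · intro hodd
        have hao : Odd a := by
          rcases Nat.even_or_odd a with hae | hao
          · exact absurd (hae.mul_right b) (Nat.not_even_iff_odd.mpr hodd)
          · exact hao
        have hbo : Odd b := by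
          rcases Nat.even_or_odd b with hbe | hbo
          · exact absurd (hbe.mul_left a) (Nat.not_even_iff_odd.mpr hodd)
          · exact hbo
        calc a * b ≤ (Nat.totient a ^ 2) * (Nat.totient b ^ 2) :=
            Nat.mul_le_mul (iha.2 hao) (ihb.2 hbo)
          _ = (Nat.totient a * Nat.totient b) ^ 2 := by ring
          _ = Nat.totient (a * b) ^ 2 := by rw [htot]

/-- Key arithmetic lemma: any prime `q` not dividing `s` but dividing `f(s)`
divides `s ^ (2 d²)! - 1`. -/
private lemma aux_key (f : Polynomial ℤ) (hf : f.Monic) (N : ℕ)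
    (hN : ∀ p : ℕ, p.Prime → N ≤ p → f.eval (p : ℤ) ∣ f.eval ((p : ℤ) ^ p))
    {q : ℕ} (hq : q.Prime) {s : ℤ} (hqs : ¬ (q : ℤ) ∣ s)
    (hfs : (q : ℤ) ∣ f.eval s) :
    (q : ℤ) ∣ s ^ (2 * f.natDegree ^ 2).factorial - 1 := by
  haveI : Fact q.Prime := ⟨hq⟩
  set d := f.natDegree with hd
  have hs0 : (s : ZMod q) ≠ 0 := by
    rwa [Ne, ZMod.intCast_zmod_eq_zero_iff_dvd]
  have hsu : IsUnit (s : ZMod q) := isUnit_iff_ne_zero.mpr hs0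
  set u := hsu.unit with hu
  have huval : (u : ZMod q) = (s : ZMod q) := hsu.unit_spec
  set t := orderOf u with htdef
  have ht_pos : 0 < t := orderOf_pos u
  have hst : (q : ℤ) ∣ s ^ t - 1 := by
    have h1 : ((s : ZMod q)) ^ t = 1 := by
      rw [← huval, ← Units.val_pow_eq_pow_val, pow_orderOf_eq_one, Units.val_one]
    have : ((s ^ t - 1 : ℤ) : ZMod q) = 0 := by
      push_cast
      rw [h1, sub_self]
    exact (ZMod.intCast_zmod_eq_zero_iff_dvd _ _).mp this
  have htq : t ∣ q - 1 := by
    have h := orderOf_dvd_card (x := u)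
    rwa [ZMod.card_units q] at h
  -- each j coprime to t gives q ∣ f(s^j)
  have key : ∀ j : ℕ, t.Coprime j → (q : ℤ) ∣ f.eval (s ^ j) := by
    intro j hj
    have hqt : Nat.Coprime q t := by
      rw [Nat.Prime.coprime_iff_not_dvd hq]
      intro hdvd
      have h1 : t ≤ q - 1 := Nat.le_of_dvd (by have := hq.two_le; omega) htq
      have h2 : q ≤ t := Nat.le_of_dvd ht_pos hdvd
      omega
    haveI : NeZero (q * t) := ⟨Nat.mul_ne_zero hq.pos.ne' ht_pos.ne'⟩
    set e := ZMod.chineseRemainder hqt with he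
    set a : ZMod (q * t) := e.symm ((s : ZMod q), (j : ZMod t)) with ha
    have hunit : IsUnit a := by
      have h2 : IsUnit ((j : ZMod t)) := (ZMod.isUnit_iff_coprime j t).mpr hj.symm
      obtain ⟨a1, ha1⟩ := isUnit_iff_exists_inv.mp hsu
      obtain ⟨a2, ha2⟩ := isUnit_iff_exists_inv.mp h2
      have h1 : IsUnit ((s : ZMod q), (j : ZMod t)) :=
        isUnit_iff_exists_inv.mpr ⟨(a1, a2), by rw [Prod.mk_mul_mk, ha1, ha2]; rfl⟩
      exact h1.map e.symm
    obtain ⟨p, hpgt, hpp, hpa⟩ :=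
      Nat.forall_exists_prime_gt_and_eq_mod hunit (max N (q + j))
    have hpN : N ≤ p := le_of_lt (lt_of_le_of_lt (le_max_left _ _) hpgt)
    have hpj : j ≤ p := by
      have := lt_of_le_of_lt (le_max_right _ _) hpgt
      omega
    -- decode the two congruences
    have hpair : ((p : ZMod q), (p : ZMod t)) = ((s : ZMod q), (j : ZMod t)) := by
      have h1 : e ((p : ZMod (q * t))) = ((p : ZMod q), (p : ZMod t)) := by
        rw [map_natCast e p]
        rfl
      rw [← h1, hpa, ha, RingEquiv.apply_symm_apply]
    have hpq : ((p : ℕ) : ZMod q) = (s : ZMod q) := by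
      have := congrArg Prod.fst hpair; simpa using this
    have hpt : ((p : ℕ) : ZMod t) = (j : ZMod t) := by
      have := congrArg Prod.snd hpair; simpa using this
    -- q ∣ p - s
    have hqps : (q : ℤ) ∣ (p : ℤ) - s := by
      have : (((p : ℤ) - s : ℤ) : ZMod q) = 0 := by
        push_cast
        rw [hpq]
        exact sub_self _
      exact (ZMod.intCast_zmod_eq_zero_iff_dvd _ _).mp this
    -- p ≡ j mod t
    obtain ⟨k, hk⟩ : ∃ k, p = j + t * k := by
      have hmod : p ≡ j [MOD t] := (ZMod.natCast_eq_natCast_iff _ _ _).mp hpt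
      have hdvd : t ∣ p - j := (Nat.modEq_iff_dvd' hpj).mp hmod.symm
      obtain ⟨k, hk⟩ := hdvd
      exact ⟨k, by omega⟩
    -- chain of divisibilities
    have h1 : (q : ℤ) ∣ f.eval (p : ℤ) := by
      have hq2 : (q : ℤ) ∣ f.eval (p : ℤ) - f.eval s :=
        hqps.trans (sub_dvd_eval_sub (p : ℤ) s f)
      have := dvd_add hq2 hfs
      simpa using this
    have h3 : (q : ℤ) ∣ f.eval ((p : ℤ) ^ p) := h1.trans (hN p hpp hpN)
    have h4 : (q : ℤ) ∣ (p : ℤ) ^ p - s ^ p :=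
      hqps.trans (sub_dvd_pow_sub_pow (p : ℤ) s p)
    have h5 : (q : ℤ) ∣ s ^ p - s ^ j := by
      have hsp : s ^ p = s ^ j * (s ^ t) ^ k := by
        rw [hk, pow_add, pow_mul]
      have hd : (q : ℤ) ∣ (s ^ t) ^ k - 1 := by
        have := sub_dvd_pow_sub_pow (s ^ t) 1 k
        rw [one_pow] at this
        exact hst.trans this
      have : s ^ p - s ^ j = s ^ j * ((s ^ t) ^ k - 1) := by
        rw [hsp]; ring
      rw [this]
      exact hd.mul_left _
    have h6 : (q : ℤ) ∣ (p : ℤ) ^ p - s ^ j := by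
      have := dvd_add h4 h5
      simpa using this
    have h7 : (q : ℤ) ∣ f.eval ((p : ℤ) ^ p) - f.eval (s ^ j) :=
      h6.trans (sub_dvd_eval_sub _ _ f)
    have := dvd_sub h3 h7
    simpa using this
  -- root counting : totient t ≤ d
  classical
  have htot : t.totient ≤ d := by
    set F := f.map (Int.castRingHom (ZMod q)) with hF
    have hFm : F.Monic := hf.map _
    have hFne : F ≠ 0 := hFm.ne_zero
    have hFdeg : F.natDegree = d := hf.natDegree_map _
    have hmem : ∀ j ∈ (Finset.range t).filter (t.Coprime ·),
        ((s : ZMod q)) ^ j ∈ F.roots.toFinset := by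
      intro j hjmem
      simp only [Finset.mem_filter, Finset.mem_range] at hjmem
      rw [Multiset.mem_toFinset, mem_roots hFne]
      have hq_dvd := key j hjmem.2
      have hcast : ((f.eval (s ^ j) : ℤ) : ZMod q) = 0 :=
        (ZMod.intCast_zmod_eq_zero_iff_dvd _ q).mpr hq_dvd
      have heq : F.eval (((s ^ j : ℤ) : ZMod q)) = ((f.eval (s ^ j) : ℤ) : ZMod q) := by
        rw [eval_map]
        exact eval₂_at_apply (Int.castRingHom (ZMod q)) (s ^ j)
      have hpow : (((s ^ j : ℤ)) : ZMod q) = ((s : ZMod q)) ^ j := by push_cast; ring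
      rw [IsRoot, ← hpow, heq, hcast]
    have hinj : Set.InjOn (fun j : ℕ => ((s : ZMod q)) ^ j)
        ↑((Finset.range t).filter (t.Coprime ·)) := by
      intro j1 h1 j2 h2 hEq
      simp only [Finset.coe_filter, Set.mem_setOf_eq, Finset.mem_range] at h1 h2
      have hu_eq : u ^ j1 = u ^ j2 := by
        apply Units.ext
        rw [Units.val_pow_eq_pow_val, Units.val_pow_eq_pow_val, huval]
        exact hEq
      exact pow_injOn_Iio_orderOf (Set.mem_Iio.mpr h1.1) (Set.mem_Iio.mpr h2.1) hu_eq
    have hcard := Finset.card_le_card_of_injOn _ hmem hinj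
    have h1 : t.totient = ((Finset.range t).filter (t.Coprime ·)).card := by
      rw [Nat.totient_eq_card_coprime]
    have h2 : F.roots.toFinset.card ≤ F.roots.card := Multiset.toFinset_card_le _
    have h3 : F.roots.card ≤ F.natDegree := by
      have := Polynomial.card_roots' F
      exact this
    omega
  -- conclude
  have ht2 : t ≤ 2 * d ^ 2 := by
    have h1 : t ≤ 2 * t.totient ^ 2 := (aux_totient_sq t).1
    have h2 : t.totient ^ 2 ≤ d ^ 2 := Nat.pow_le_pow_left htot 2
    omega
  obtain ⟨k, hk⟩ : t ∣ (2 * d ^ 2).factorial := Nat.dvd_factorial ht_pos ht2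
  have : s ^ (2 * d ^ 2).factorial - 1 = (s ^ t) ^ k - 1 ^ k := by
    rw [hk, pow_mul, one_pow]
  rw [this]
  exact hst.trans (sub_dvd_pow_sub_pow (s ^ t) 1 k)

/-- There are arbitrarily large primes dividing values `g(s)` with `q ∤ s`. -/
private lemma aux_primes (g : Polynomial ℤ) (hg : g.Monic) (hdeg : 0 < g.natDegree)
    (hg0 : g.eval 0 ≠ 0) (M : ℕ) :
    ∃ q : ℕ, M < q ∧ q.Prime ∧ ∃ s : ℤ, (q : ℤ) ∣ g.eval s ∧ ¬ (q : ℤ) ∣ s := by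
  classical
  set c := g.eval 0 with hc
  set M' := max M c.natAbs with hM'
  set K : ℤ := (M'.factorial : ℤ) with hK
  have hK0 : K ≠ 0 := by
    simp [hK, Nat.factorial_ne_zero]
  have hcK : c * K ≠ 0 := mul_ne_zero hg0 hK0
  -- bad set of values
  have hgne : g ≠ 0 := hg.ne_zero
  have hsubne : g - C c ≠ 0 := by
    intro h
    have := natDegree_sub_C (p := g) (a := c)
    rw [h, natDegree_zero] at this
    omega
  have haddne : g + C c ≠ 0 := by
    intro h
    have h2 : g - C (-c) = 0 := by rwa [map_neg, sub_neg_eq_add]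
    have := natDegree_sub_C (p := g) (a := -c)
    rw [h2, natDegree_zero] at this
    omega
  have hfin : ({x : ℤ | g.IsRoot x} ∪ ({x : ℤ | (g - C c).IsRoot x} ∪
      {x : ℤ | (g + C c).IsRoot x})).Finite :=
    (Polynomial.finite_setOf_isRoot hgne).union
      ((Polynomial.finite_setOf_isRoot hsubne).union (Polynomial.finite_setOf_isRoot haddne))
  have hinj : Function.Injective (fun u : ℤ => c * K * u) := fun x y hxy => by
    exact mul_left_cancel₀ hcK hxy
  have hpre : ((fun u : ℤ => c * K * u) ⁻¹' _).Finite := hfin.preimage hinj.injOn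
  obtain ⟨v, hv⟩ := hpre.infinite_compl.nonempty
  set s : ℤ := c * K * v with hs
  have hsbad : ¬ (g.IsRoot s ∨ ((g - C c).IsRoot s ∨ (g + C c).IsRoot s)) := by
    intro hbad
    exact hv (by simpa [hs, Set.mem_preimage] using hbad)
  push_neg at hsbad
  obtain ⟨hroot1, hroot2, hroot3⟩ := hsbad
  have hval1 : g.eval s ≠ 0 := hroot1
  have hval2 : g.eval s ≠ c := fun h => hroot2 (by simp [IsRoot, eval_sub, eval_C, h])
  have hval3 : g.eval s ≠ -c := fun h => hroot3 (by simp [IsRoot, eval_add, eval_C, h])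
  -- write g(s) = c * A
  obtain ⟨w, hw⟩ : s ∣ g.eval s - c := by
    have := sub_dvd_eval_sub s 0 g
    simpa [hc] using this
  set A : ℤ := 1 + K * v * w with hA
  have hgs : g.eval s = c * A := by
    have : g.eval s = c + s * w := by omega
    rw [this, hs, hA]; ring
  have hA2 : 2 ≤ A.natAbs := by
    have h0 : A ≠ 0 := fun h => hval1 (by rw [hgs, h, mul_zero])
    have h1 : A ≠ 1 := fun h => hval2 (by rw [hgs, h, mul_one])
    have h2 : A ≠ -1 := fun h => hval3 (by rw [hgs, h]; ring)
    omega
  obtain ⟨q, hq_prime, hq_dvd⟩ := Nat.exists_prime_and_dvd (by omega : A.natAbs ≠ 1)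
  have hqA : (q : ℤ) ∣ A := by
    have : (q : ℤ) ∣ (A.natAbs : ℤ) := Int.natCast_dvd_natCast.mpr hq_dvd
    exact Int.dvd_natAbs.mp this
  have hqM' : M' < q := by
    by_contra hle
    push_neg at hle
    have h1 : (q : ℕ) ∣ M'.factorial := Nat.dvd_factorial hq_prime.pos hle
    have h2 : (q : ℤ) ∣ K := by
      rw [hK]
      exact_mod_cast h1
    have h3 : (q : ℤ) ∣ K * v * w := (h2.mul_right v).mul_right w
    have h4 : (q : ℤ) ∣ 1 := by
      have := dvd_sub hqA h3
      simpa [hA] using this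
    have := Int.le_of_dvd one_pos h4
    have := hq_prime.two_le
    omega
  refine ⟨q, lt_of_le_of_lt (le_max_left _ _) hqM', hq_prime, s, ?_, ?_⟩
  · rw [hgs]; exact hqA.mul_left c
  · intro hqs
    have h1 : (q : ℤ) ∣ c := by
      have hsc : s ∣ g.eval s - c := ⟨w, hw⟩
      have h2 : (q : ℤ) ∣ g.eval s - c := hqs.trans hsc
      have h3 : (q : ℤ) ∣ g.eval s := by rw [hgs]; exact hqA.mul_left c
      have := dvd_sub h3 h2
      simpa using this
    have h2 : (q : ℕ) ∣ c.natAbs := by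
      rwa [Int.natCast_dvd] at h1
    have h3 : q ≤ c.natAbs := Nat.le_of_dvd (by omega) h2
    omega

/-- Bezout identity over `ℤ[X]` for a monic irreducible not dividing `h`. -/
private lemma aux_bezout (g h : Polynomial ℤ) (hg : g.Monic) (hirr : Irreducible g)
    (hnd : ¬ g ∣ h) :
    ∃ n : ℤ, n ≠ 0 ∧ ∃ U V : Polynomial ℤ, U * g + V * h = C n := by
  have hinj : Function.Injective (algebraMap ℤ ℚ) := fun x y hxy => by exact_mod_cast hxy
  have hgq_irr : Irreducible (g.map (algebraMap ℤ ℚ)) :=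
    (hg.irreducible_iff_irreducible_map_fraction_map).mp hirr
  have hndq : ¬ g.map (algebraMap ℤ ℚ) ∣ h.map (algebraMap ℤ ℚ) := fun hdd =>
    hnd ((map_dvd_map _ hinj hg).mp hdd)
  have hcop : IsCoprime (g.map (algebraMap ℤ ℚ)) (h.map (algebraMap ℤ ℚ)) :=
    (hgq_irr.coprime_iff_not_dvd).mpr hndq
  obtain ⟨uu, vv, huv⟩ := hcop
  obtain ⟨a, haa⟩ := IsLocalization.integerNormalization_map_to_map (nonZeroDivisors ℤ) uu
  obtain ⟨b, hbb⟩ := IsLocalization.integerNormalization_map_to_map (nonZeroDivisors ℤ) vv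
  set U := IsLocalization.integerNormalization (nonZeroDivisors ℤ) uu with hU
  set V := IsLocalization.integerNormalization (nonZeroDivisors ℤ) vv with hV
  have hsmul : ∀ (z : ℤ) (P : Polynomial ℚ), z • P = C ((z : ℚ)) * P := by
    intro z P
    ext i
    simp [Polynomial.coeff_smul, Polynomial.coeff_C_mul, zsmul_eq_mul]
  have ha0 : (a : ℤ) ≠ 0 := nonZeroDivisors.coe_ne_zero a
  have hb0 : (b : ℤ) ≠ 0 := nonZeroDivisors.coe_ne_zero b
  refine ⟨(a : ℤ) * (b : ℤ), mul_ne_zero ha0 hb0, U * C (b : ℤ), V * C (a : ℤ), ?_⟩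
  apply Polynomial.map_injective (algebraMap ℤ ℚ) hinj
  rw [Polynomial.map_add, Polynomial.map_mul, Polynomial.map_mul, Polynomial.map_mul,
    Polynomial.map_mul, haa, hbb, Polynomial.map_C, Polynomial.map_C, Polynomial.map_C,
    hsmul, hsmul]
  have halg : ∀ z : ℤ, algebraMap ℤ ℚ z = (z : ℚ) := fun z => rfl
  rw [halg, halg, halg]
  push_cast
  rw [Polynomial.C_mul]
  linear_combination (C ((a : ℤ) : ℚ) * C ((b : ℤ) : ℚ)) * huv

/-- If every monic irreducible factor of a monic `f` divides `X^(L+1) - X`,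
then `f` is a product of a power of `X` and cyclotomic polynomials. -/
private lemma aux_factor : ∀ (n : ℕ) (f : Polynomial ℤ), f.natDegree = n → f.Monic →
    ∀ L : ℕ, 0 < L →
    (∀ g : Polynomial ℤ, g.Monic → Irreducible g → g ∣ f → g ∣ X ^ (L + 1) - X) →
    ∃ (e₀ m : ℕ) (d e : Fin m → ℕ), 0 < m ∧ (∀ i, 0 < d i) ∧
      f = X ^ e₀ * ∏ i, (cyclotomic (d i) ℤ) ^ (e i) := by
  intro n
  induction n using Nat.strong_induction_on with
  | _ n ih =>
    intro f hfn hf L hL hfac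
    rcases Nat.eq_zero_or_pos n with h0 | hpos
    · have hf1 : f = 1 := hf.natDegree_eq_zero.mp (by omega)
      exact ⟨0, 1, fun _ => 1, fun _ => 0, one_pos, fun _ => one_pos, by simp [hf1]⟩
    · have hfu : ¬ IsUnit f := by
        intro h
        have := natDegree_eq_zero_of_isUnit h
        omega
      obtain ⟨g0, hg0_irr, hg0_dvd⟩ := WfDvdMonoid.exists_irreducible_factor hfu hf.ne_zero
      -- make it monic
      have hlc : g0.leadingCoeff = 1 ∨ g0.leadingCoeff = -1 := by
        obtain ⟨h, hh⟩ := hg0_dvd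
        have hmul : g0.leadingCoeff * h.leadingCoeff = 1 := by
          rw [← leadingCoeff_mul, ← hh]
          exact hf.leadingCoeff
        have := Int.isUnit_iff.mp (IsUnit.of_mul_eq_one _ hmul)
        exact this
      obtain ⟨g, hg_monic, hg_irr, hg_dvd⟩ :
          ∃ g : Polynomial ℤ, g.Monic ∧ Irreducible g ∧ g ∣ f := by
        rcases hlc with h1 | h1
        · exact ⟨g0, h1, hg0_irr, hg0_dvd⟩
        · refine ⟨-g0, ?_, ?_, (neg_dvd).mpr hg0_dvd⟩
          · rw [Monic, leadingCoeff_neg, h1, neg_neg]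
          · have hassoc : Associated g0 (-g0) := ⟨-1, by simp⟩
            exact hassoc.irreducible hg0_irr
      have hgX := hfac g hg_monic hg_irr hg_dvd
      have hXL : (X : Polynomial ℤ) ^ (L + 1) - X = X * (X ^ L - 1) := by ring
      rw [hXL] at hgX
      have hgp : Prime g := UniqueFactorizationMonoid.irreducible_iff_prime.mp hg_irr
      have hgdeg : 0 < g.natDegree := by
        rcases Nat.eq_zero_or_pos g.natDegree with h | h
        · exfalso
          have := hg_monic.natDegree_eq_zero.mp h
          exact hg_irr.not_isUnit (this ▸ isUnit_one)
        · exact h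
      -- a helper for the inductive step
      have hstep : ∀ w : Polynomial ℤ, w.Monic → 0 < w.natDegree → w ∣ f →
          ∃ f₁ : Polynomial ℤ, f = w * f₁ ∧ f₁.Monic ∧ f₁.natDegree < n ∧
            (∀ g' : Polynomial ℤ, g'.Monic → Irreducible g' → g' ∣ f₁ →
              g' ∣ X ^ (L + 1) - X) := by
        intro w hw_monic hw_deg hw_dvd
        obtain ⟨f₁, hf₁⟩ := hw_dvd
        have hf₁_monic : f₁.Monic := by
          have hwf : (w * f₁).Monic := hf₁ ▸ hf
          exact Polynomial.Monic.of_mul_monic_left hw_monic hwf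
        have hf₁_ne : f₁ ≠ 0 := hf₁_monic.ne_zero
        have hdeg_eq : w.natDegree + f₁.natDegree = n := by
          rw [← hfn, hf₁, natDegree_mul hw_monic.ne_zero hf₁_ne]
        refine ⟨f₁, hf₁, hf₁_monic, by omega, ?_⟩
        intro g' hm hi hd
        exact hfac g' hm hi (hd.trans (Dvd.intro_left w hf₁.symm))
      rcases (hgp.dvd_mul.mp hgX) with hcase | hcase
      · -- g = X
        have hgeqX : g = X := by
          have hassoc : Associated g (X : Polynomial ℤ) :=
            hg_irr.associated_of_dvd (prime_X.irreducible) hcase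
          exact eq_of_monic_of_associated hg_monic monic_X hassoc
        obtain ⟨f₁, hf₁, hf₁m, hf₁lt, hf₁fac⟩ :=
          hstep X monic_X (by simp) (hgeqX ▸ hg_dvd)
        obtain ⟨e₀, m, dd, ee, hm, hdd, heq⟩ :=
          ih f₁.natDegree hf₁lt f₁ rfl hf₁m L hL hf₁fac
        exact ⟨e₀ + 1, m, dd, ee, hm, hdd, by rw [hf₁, heq]; ring⟩
      · -- g = cyclotomic i
        rw [← prod_cyclotomic_eq_X_pow_sub_one hL ℤ] at hcase
        obtain ⟨i, hi_mem, hgi_dvd⟩ := hgp.exists_mem_finset_dvd hcase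
        have hipos : 0 < i := Nat.pos_of_mem_divisors hi_mem
        have hgeq : g = cyclotomic i ℤ := by
          have hassoc : Associated g (cyclotomic i ℤ) :=
            hg_irr.associated_of_dvd (cyclotomic.irreducible hipos) hgi_dvd
          exact eq_of_monic_of_associated hg_monic (cyclotomic.monic i ℤ) hassoc
        have hcyc_deg : 0 < (cyclotomic i ℤ).natDegree := by
          rw [natDegree_cyclotomic]
          exact Nat.totient_pos.mpr hipos
        obtain ⟨f₁, hf₁, hf₁m, hf₁lt, hf₁fac⟩ :=
          hstep (cyclotomic i ℤ) (cyclotomic.monic i ℤ) hcyc_deg (hgeq ▸ hg_dvd)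
        obtain ⟨e₀, m, dd, ee, hm, hdd, heq⟩ :=
          ih f₁.natDegree hf₁lt f₁ rfl hf₁m L hL hf₁fac
        refine ⟨e₀, m + 1, Fin.cons i dd, Fin.cons 1 ee, Nat.succ_pos m, ?_, ?_⟩
        · intro j
          refine Fin.cases ?_ ?_ j
          · simpa using hipos
          · intro j'
            simpa using hdd j'
        · rw [hf₁, heq, Fin.prod_univ_succ]
          simp only [Fin.cons_zero, Fin.cons_succ, pow_one]
          ring

theorem stmt_0 (f : Polynomial ℤ) (hf : f.Monic)
    (hdvd : ∃ N : ℕ, 0 < N ∧ ∀ p : ℕ, p.Prime → N ≤ p →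
      f.eval (p : ℤ) ∣ f.eval ((p : ℤ) ^ p)) :
    ∃ (e₀ m : ℕ) (d e : Fin m → ℕ), 0 < m ∧ (∀ i, 0 < d i) ∧
      f = X ^ e₀ * ∏ i, (cyclotomic (d i) ℤ) ^ (e i) := by
  obtain ⟨N, hN0, hN⟩ := hdvd
  set L := (2 * f.natDegree ^ 2).factorial with hLdef
  have hL : 0 < L := Nat.factorial_pos _
  have hfac : ∀ g : Polynomial ℤ, g.Monic → Irreducible g → g ∣ f →
      g ∣ X ^ (L + 1) - X := by
    intro g hg hgi hgf
    by_contra hnd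
    -- g(0) ≠ 0
    have hg0 : g.eval 0 ≠ 0 := by
      intro h0
      have hX : (X : Polynomial ℤ) ∣ g :=
        X_dvd_iff.mpr (by rwa [coeff_zero_eq_eval_zero])
      have hassoc : Associated (X : Polynomial ℤ) g :=
        (prime_X.irreducible).associated_of_dvd hgi hX
      have hgX : g = X := eq_of_monic_of_associated hg monic_X hassoc.symm
      apply hnd
      rw [hgX]
      exact ⟨X ^ L - 1, by ring⟩
    have hgdeg : 0 < g.natDegree := by
      rcases Nat.eq_zero_or_pos g.natDegree with h | h
      · exact absurd ((hg.natDegree_eq_zero.mp h) ▸ isUnit_one) hgi.not_isUnit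
      · exact h
    obtain ⟨n, hn0, U, V, hUV⟩ := aux_bezout g (X ^ (L + 1) - X) hg hgi hnd
    obtain ⟨q, hq_gt, hq_prime, s, hq_dvd, hq_nds⟩ := aux_primes g hg hgdeg hg0 n.natAbs
    have hqf : (q : ℤ) ∣ f.eval s := hq_dvd.trans (eval_dvd hgf)
    have hkey := aux_key f hf N hN hq_prime hq_nds hqf
    have heval := congrArg (Polynomial.eval s) hUV
    simp only [eval_add, eval_mul, eval_sub, eval_pow, eval_X, eval_C] at heval
    have hqn : (q : ℤ) ∣ n := by
      rw [← heval]
      apply dvd_add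
      · exact (hq_dvd.mul_left _)
      · have hfact : s ^ (L + 1) - s = s * (s ^ L - 1) := by ring
        rw [hfact]
        exact ((hkey.mul_left s).mul_left _)
    have h1 : (q : ℕ) ∣ n.natAbs := by rwa [Int.natCast_dvd] at hqn
    have h2 : q ≤ n.natAbs := Nat.le_of_dvd (by omega) h1
    omega
  exact aux_factor f.natDegree f rfl hf L hL hfac
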